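/- Consider the general metric space structure on ℝ≥0∞ given by d x y = y - x (truncated subtraction). Every proper filter of type 1 on this space has type ω; that is, for every proper filter F on ℝ≥0∞ with ⨅_{s ∈ F} ⨆_{x ∈ s} ⨆_{t ∈ F} ⨅_{y ∈ t} (y - x) = 0 and every ε > 0, there exists s ∈ F such that for every finite family (x_i) of elements of s and every t ∈ F, there exists y ∈ t with y - x_i ≤ ε for all i. -/
import Mathlib


open ENNReal Filter

/-- A proper filter `F` on a general metric space has type `ω` when for every `ε > 0`
there is `s ∈ F` such that every finite family of elements of `s` is `ε`-dominated by
some point of every `t ∈ F`. -/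
def HasTypeOmega {A : Type*} (d : A → A → ℝ≥0∞) (F : Filter A) : Prop :=
  F.NeBot ∧
  ∀ ε : ℝ≥0∞, 0 < ε → ∃ s ∈ F, ∀ (n : ℕ) (x : Fin n → A),
    (∀ i, x i ∈ s) → ∀ t ∈ F, ∃ y ∈ t, ∀ i, d (x i) y ≤ ε

/-- On the general metric space `ℝ≥0∞` with `d x y = y - x` (truncated subtraction),
every proper filter of type 1 has type `ω`. -/
theorem type1_hasTypeOmega_on_ennreal (F : Filter ℝ≥0∞) (hF : F.NeBot)
    (h1 : (⨅ s ∈ F, ⨆ x ∈ s, ⨆ t ∈ F, ⨅ y ∈ t, y - x) = 0) :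
    HasTypeOmega (fun x y => y - x) F := by
  refine ⟨hF, fun ε hε => ?_⟩
  have hlt : (⨅ s ∈ F, ⨆ x ∈ s, ⨆ t ∈ F, ⨅ y ∈ t, y - x) < ε := h1 ▸ hε
  simp only [iInf_lt_iff] at hlt
  obtain ⟨s, hsF, hs⟩ := hlt
  refine ⟨s, hsF, fun n x hx t ht => ?_⟩
  rcases Nat.eq_zero_or_pos n with rfl | hn
  · obtain ⟨y, hy⟩ := hF.nonempty_of_mem ht
    exact ⟨y, hy, fun i => i.elim0⟩
  · obtain ⟨i₀, -, hi₀⟩ := Finset.exists_min_image Finset.univ x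
      ⟨⟨0, hn⟩, Finset.mem_univ _⟩
    have hM : (⨅ y ∈ t, y - x i₀) < ε := by
      refine lt_of_le_of_lt ?_ hs
      calc (⨅ y ∈ t, y - x i₀)
          ≤ ⨆ t ∈ F, ⨅ y ∈ t, y - x i₀ := le_iSup₂ (f := fun t _ => ⨅ y ∈ t, y - x i₀) t ht
        _ ≤ ⨆ x ∈ s, ⨆ t ∈ F, ⨅ y ∈ t, y - x :=
            le_iSup₂ (f := fun z _ => ⨆ t ∈ F, ⨅ y ∈ t, y - z) (x i₀) (hx i₀)
    simp only [iInf_lt_iff] at hM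
    obtain ⟨y, hyt, hy⟩ := hM
    exact ⟨y, hyt, fun i =>
      le_trans (tsub_le_tsub_left (hi₀ i (Finset.mem_univ i)) y) hy.le⟩
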